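/- Operator lemma used in the proof of Theorem 3.5 (construction of the majorant): Let H be a complex Hilbert space, A a positive bounded linear operator on H, and p_1, …, p_N orthogonal projections on H that are pairwise orthogonal (p_i p_j = 0 for i ≠ j); set q = p_1 + ⋯ + p_N. Suppose c_1, …, c_N ≥ 0 satisfy p_k A p_k ≤ c_k p_k for each k, and let α_1, …, α_N > 0. Then q A q ≤ (Σ_{k=1}^N c_k/α_k) · (Σ_{k=1}^N α_k p_k) in the Loewner order; that is, ⟨q A q ξ, ξ⟩ ≤ (Σ_{k=1}^N c_k/α_k) · Σ_{k=1}^N α_k ‖p_k ξ‖² for all ξ ∈ H. -/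

import Mathlib

open ContinuousLinearMap

/-- A self-adjoint operator can be moved across the inner product. -/
lemma sa_inner_move {H : Type*} [NormedAddCommGroup H] [InnerProductSpace ℂ H] [CompleteSpace H]
    (T : H →L[ℂ] H) (hT : IsSelfAdjoint T) (u v : H) :
    (inner ℂ (T u) v : ℂ) = inner ℂ u (T v) := by
  conv_lhs => rw [← hT.adjoint_eq]
  exact ContinuousLinearMap.adjoint_inner_left T v u

/-- Cauchy–Schwarz for a positive operator. -/
lemma pos_op_cauchy_schwarz
    {H : Type*} [NormedAddCommGroup H] [InnerProductSpace ℂ H] [CompleteSpace H]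
    (A : H →L[ℂ] H) (hA : A.IsPositive) (x y : H) :
    (inner ℂ (A x) y : ℂ).re ≤
      Real.sqrt (inner ℂ (A x) x : ℂ).re * Real.sqrt (inner ℂ (A y) y : ℂ).re := by
  set core : PreInnerProductSpace.Core ℂ H :=
    { inner := fun u v => (inner ℂ (A u) v : ℂ)
      conj_inner_symm := fun u v => by
        show (starRingEnd ℂ) (inner ℂ (A v) u : ℂ) = (inner ℂ (A u) v : ℂ)
        rw [inner_conj_symm]; exact (sa_inner_move A hA.isSelfAdjoint u v).symm
      re_inner_nonneg := fun u => hA.re_inner_nonneg_left u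
      add_left := fun u v w => by simp [inner_add_left]
      smul_left := fun u v r => by simp [inner_smul_left, mul_comm] }
  have key := InnerProductSpace.Core.inner_mul_inner_self_le (𝕜 := ℂ) (c := core) x y
  have h1 : ‖(inner ℂ (A x) y : ℂ)‖ = ‖(inner ℂ (A y) x : ℂ)‖ := by
    rw [sa_inner_move A hA.isSelfAdjoint y x]
    exact norm_inner_symm _ _
  have h2 : ‖(inner ℂ (A x) y : ℂ)‖ ^ 2 ≤ (inner ℂ (A x) x : ℂ).re * (inner ℂ (A y) y : ℂ).re := by
    calc ‖(inner ℂ (A x) y : ℂ)‖ ^ 2 = ‖(inner ℂ (A x) y : ℂ)‖ * ‖(inner ℂ (A y) x : ℂ)‖ := by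
          rw [← h1]; ring
      _ ≤ _ := key
  calc (inner ℂ (A x) y : ℂ).re ≤ ‖(inner ℂ (A x) y : ℂ)‖ := Complex.re_le_norm _
    _ = Real.sqrt (‖(inner ℂ (A x) y : ℂ)‖ ^ 2) := by
        rw [Real.sqrt_sq (norm_nonneg _)]
    _ ≤ Real.sqrt ((inner ℂ (A x) x : ℂ).re * (inner ℂ (A y) y : ℂ).re) :=
        Real.sqrt_le_sqrt h2
    _ = _ := Real.sqrt_mul (hA.re_inner_nonneg_left x) _

theorem proj_sum_positive_majorant
    {H : Type*} [NormedAddCommGroup H] [InnerProductSpace ℂ H] [CompleteSpace H]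
    (N : ℕ) (A : H →L[ℂ] H) (hA : A.IsPositive)
    (p : Fin N → (H →L[ℂ] H))
    (hp_sa : ∀ k, IsSelfAdjoint (p k)) (hp_idem : ∀ k, p k ∘L p k = p k)
    (hp_orth : ∀ i j, i ≠ j → p i ∘L p j = 0)
    (q : H →L[ℂ] H) (hq : q = ∑ k, p k)
    (c : Fin N → ℝ) (hc : ∀ k, 0 ≤ c k)
    (hcA : ∀ k, (((c k : ℂ) • p k) - (p k ∘L A ∘L p k)).IsPositive)
    (α : Fin N → ℝ) (hα : ∀ k, 0 < α k) :
    ∀ ξ : H, (inner ℂ ((q ∘L A ∘L q) ξ) ξ : ℂ).re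
      ≤ (∑ k, c k / α k) * ∑ k, α k * ‖p k ξ‖ ^ 2 := by
  intro ξ
  have hq_sa : IsSelfAdjoint q := by
    rw [hq]
    unfold IsSelfAdjoint
    rw [star_sum]
    exact Finset.sum_congr rfl fun k _ => hp_sa k
  have h0 : (inner ℂ ((q ∘L A ∘L q) ξ) ξ : ℂ) = inner ℂ (A (q ξ)) (q ξ) := by
    simp only [comp_apply]
    exact sa_inner_move q hq_sa (A (q ξ)) ξ
  set s : Fin N → ℝ := fun k => Real.sqrt (inner ℂ (A (p k ξ)) (p k ξ) : ℂ).re with hs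
  have hs_nonneg : ∀ k, 0 ≤ s k := fun k => Real.sqrt_nonneg _
  have h1 : (inner ℂ (A (q ξ)) (q ξ) : ℂ).re ≤ (∑ k, s k) ^ 2 := by
    have hqx : q ξ = ∑ k, p k ξ := by
      rw [hq]; exact ContinuousLinearMap.sum_apply _ _ _
    rw [hqx]
    have hexp : (inner ℂ (A (∑ k, p k ξ)) (∑ k, p k ξ) : ℂ).re
        = ∑ i, ∑ j, (inner ℂ (A (p i ξ)) (p j ξ) : ℂ).re := by
      rw [map_sum, sum_inner]
      simp [inner_sum, Complex.re_sum]
    rw [hexp, sq, Finset.sum_mul]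
    apply Finset.sum_le_sum
    intro i _
    rw [Finset.mul_sum]
    apply Finset.sum_le_sum
    intro j _
    exact pos_op_cauchy_schwarz A hA (p i ξ) (p j ξ)
  have h2 : ∀ k, s k ≤ Real.sqrt (c k) * ‖p k ξ‖ := by
    intro k
    have hpos : (0:ℝ) ≤ (inner ℂ ((((c k : ℂ) • p k) - (p k ∘L A ∘L p k)) ξ) ξ : ℂ).re :=
      (hcA k).re_inner_nonneg_left ξ
    have hpk : (inner ℂ (A (p k ξ)) (p k ξ) : ℂ).re ≤ c k * ‖p k ξ‖ ^ 2 := by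
      have hpp : (inner ℂ ((p k) ξ) ξ : ℂ) = (‖p k ξ‖ : ℂ) ^ 2 := by
        have hd : p k ξ = p k (p k ξ) := by
          conv_lhs => rw [← hp_idem k]
          rfl
        conv_lhs => rw [hd]
        rw [sa_inner_move (p k) (hp_sa k) (p k ξ) ξ, inner_self_eq_norm_sq_to_K]
        norm_cast
      have hinner : (inner ℂ ((((c k : ℂ) • p k) - (p k ∘L A ∘L p k)) ξ) ξ : ℂ).re
          = c k * ‖p k ξ‖ ^ 2 - (inner ℂ (A (p k ξ)) (p k ξ) : ℂ).re := by
        simp only [ContinuousLinearMap.sub_apply, ContinuousLinearMap.smul_apply,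
          inner_sub_left, inner_smul_left, comp_apply, hpp]
        rw [sa_inner_move (p k) (hp_sa k) (A ((p k) ξ)) ξ]
        rw [Complex.conj_ofReal, ← Complex.ofReal_pow, ← Complex.ofReal_mul,
          Complex.sub_re, Complex.ofReal_re]
      rw [hinner] at hpos
      linarith
    rw [hs]
    simp only
    rw [← Real.sqrt_sq (norm_nonneg (p k ξ)), ← Real.sqrt_mul (hc k)]
    exact Real.sqrt_le_sqrt hpk
  have h3 : (∑ k, Real.sqrt (c k) * ‖p k ξ‖) ^ 2
      ≤ (∑ k, c k / α k) * ∑ k, α k * ‖p k ξ‖ ^ 2 := by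
    apply Finset.sum_sq_le_sum_mul_sum_of_sq_eq_mul
    · exact fun i _ => div_nonneg (hc i) (hα i).le
    · exact fun i _ => mul_nonneg (hα i).le (sq_nonneg _)
    · intro i _
      have hne : α i ≠ 0 := (hα i).ne'
      rw [mul_pow, Real.sq_sqrt (hc i)]
      field_simp
  have h4 : (∑ k, s k) ^ 2 ≤ (∑ k, Real.sqrt (c k) * ‖p k ξ‖) ^ 2 := by
    apply pow_le_pow_left₀ (Finset.sum_nonneg fun k _ => hs_nonneg k)
    exact Finset.sum_le_sum fun k _ => h2 k
  calc (inner ℂ ((q ∘L A ∘L q) ξ) ξ : ℂ).re = (inner ℂ (A (q ξ)) (q ξ) : ℂ).re := by rw [h0]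
    _ ≤ (∑ k, s k) ^ 2 := h1
    _ ≤ _ := le_trans h4 h3
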